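/- Let x₀ ∈ (0,∞], and let F : [0,x₀) → ℝ be a C² function with F(0) = F'(0) = 0, F'' ≥ 0 on [0,x₀), and F'(M₁) > 0 for some M₁ ∈ (0,x₀). Define v(x) = ∫₀^x 2τ √(1 + F'(τ)²) dτ, and assume v(x) → ∞ as x → x₀. Then there exist a constant C₂ > 0 and M₂ ∈ (0,x₀) such that (2v(x) - 2x²)/v(x)² ≥ C₂/v(x) for all x ∈ (M₂, x₀). -/

import Mathlib

open MeasureTheory Filter Set

/-- Let `x₀ ∈ (0,∞]` (as an extended real), and `F` a `C²` function on `[0,x₀)` with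
`F(0) = F'(0) = 0`, `F'' ≥ 0`, `F'(M₁) > 0` for some `M₁ ∈ (0,x₀)`. If
`v(x) = ∫₀^x 2τ√(1+F'(τ)²) dτ → ∞` as `x → x₀⁻`, then there are `C₂ > 0` and
`M₂ ∈ (0,x₀)` with `(2v - 2x²)/v² ≥ C₂/v` on `(M₂, x₀)`. -/
theorem stmt6 (x₀ : EReal) (hx₀ : 0 < x₀)
    (F F' F'' : ℝ → ℝ)
    (hF' : ∀ x : ℝ, 0 ≤ x → (x : EReal) < x₀ → HasDerivAt F (F' x) x)
    (hF'' : ∀ x : ℝ, 0 ≤ x → (x : EReal) < x₀ → HasDerivAt F' (F'' x) x)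
    (hF''cont : ContinuousOn F'' {x : ℝ | 0 ≤ x ∧ (x : EReal) < x₀})
    (hF0 : F 0 = 0) (hF'0 : F' 0 = 0)
    (hconv : ∀ x : ℝ, 0 ≤ x → (x : EReal) < x₀ → 0 ≤ F'' x)
    (M₁ : ℝ) (hM₁ : 0 < M₁) (hM₁x₀ : (M₁ : EReal) < x₀) (hF'M₁ : 0 < F' M₁)
    (v : ℝ → ℝ) (hv : ∀ x, v x = ∫ τ in (0 : ℝ)..x, 2 * τ * Real.sqrt (1 + F' τ ^ 2))
    (hvlim : Tendsto v
      (Filter.comap (fun x : ℝ => (x : EReal)) (nhdsWithin x₀ (Iio x₀))) atTop) :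
    ∃ C₂ > (0 : ℝ), ∃ M₂ : ℝ, 0 < M₂ ∧ (M₂ : EReal) < x₀ ∧
      ∀ x : ℝ, M₂ < x → (x : EReal) < x₀ →
        C₂ / v x ≤ (2 * v x - 2 * x ^ 2) / (v x) ^ 2 := by
  set s : ℝ := Real.sqrt (1 + F' M₁ ^ 2) with hs
  have hs1 : 1 < s := by
    rw [hs]
    have h1 : (1:ℝ) < 1 + F' M₁ ^ 2 := by nlinarith
    nlinarith [Real.sq_sqrt (by positivity : (0:ℝ) ≤ 1 + F' M₁ ^ 2),
      Real.sqrt_nonneg (1 + F' M₁ ^ 2)]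
  -- monotonicity of F' on [0, b]
  have hmono : ∀ b : ℝ, 0 ≤ b → (b : EReal) < x₀ → MonotoneOn F' (Icc 0 b) := by
    intro b hb hbx
    have hdom : ∀ τ ∈ Icc (0:ℝ) b, 0 ≤ τ ∧ (τ : EReal) < x₀ := fun τ hτ =>
      ⟨hτ.1, lt_of_le_of_lt (EReal.coe_le_coe_iff.mpr hτ.2) hbx⟩
    apply monotoneOn_of_deriv_nonneg (convex_Icc 0 b)
    · intro τ hτ
      exact ((hF'' τ (hdom τ hτ).1 (hdom τ hτ).2).continuousAt).continuousWithinAt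
    · intro τ hτ
      rw [interior_Icc] at hτ
      have hm := hdom τ ⟨le_of_lt hτ.1, le_of_lt hτ.2⟩
      exact ((hF'' τ hm.1 hm.2).differentiableAt).differentiableWithinAt
    · intro τ hτ
      rw [interior_Icc] at hτ
      have hm := hdom τ ⟨le_of_lt hτ.1, le_of_lt hτ.2⟩
      rw [(hF'' τ hm.1 hm.2).deriv]
      exact hconv τ hm.1 hm.2
  -- integrability
  have hintg : ∀ a b : ℝ, 0 ≤ a → a ≤ b → (b : EReal) < x₀ →
      IntervalIntegrable (fun τ => 2 * τ * Real.sqrt (1 + F' τ ^ 2)) volume a b := by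
    intro a b ha hab hbx
    apply ContinuousOn.intervalIntegrable
    rw [uIcc_of_le hab]
    intro τ hτ
    have h0 : 0 ≤ τ := le_trans ha hτ.1
    have h1 : (τ : EReal) < x₀ := lt_of_le_of_lt (EReal.coe_le_coe_iff.mpr hτ.2) hbx
    have : ContinuousAt (fun τ => 2 * τ * Real.sqrt (1 + F' τ ^ 2)) τ := by
      apply ContinuousAt.mul (continuousAt_const.mul continuousAt_id)
      exact Real.continuous_sqrt.continuousAt.comp
        (continuousAt_const.add (((hF'' τ h0 h1).continuousAt).pow 2))
    exact this.continuousWithinAt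
  -- key lower bound for v
  have hbound : ∀ x : ℝ, M₁ ≤ x → (x : EReal) < x₀ →
      M₁ ^ 2 + s * (x ^ 2 - M₁ ^ 2) ≤ v x := by
    intro x hM₁x hxx₀
    have hx0 : (0:ℝ) ≤ x := le_trans hM₁.le hM₁x
    rw [hv x, ← intervalIntegral.integral_add_adjacent_intervals
      (hintg 0 M₁ le_rfl hM₁.le hM₁x₀) (hintg M₁ x hM₁.le hM₁x hxx₀)]
    have hmon := hmono x hx0 hxx₀
    have h1 : M₁ ^ 2 ≤ ∫ τ in (0:ℝ)..M₁, 2 * τ * Real.sqrt (1 + F' τ ^ 2) := by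
      have hc : ∫ τ in (0:ℝ)..M₁, 2 * τ = M₁ ^ 2 := by
        rw [intervalIntegral.integral_const_mul, integral_id]
        ring
      rw [← hc]
      apply intervalIntegral.integral_mono_on hM₁.le
        (by apply ContinuousOn.intervalIntegrable; fun_prop)
        (hintg 0 M₁ le_rfl hM₁.le hM₁x₀)
      intro τ hτ
      have h2τ : (0:ℝ) ≤ 2 * τ := by linarith [hτ.1]
      nlinarith [Real.one_le_sqrt.mpr (by nlinarith [sq_nonneg (F' τ)] :
        (1:ℝ) ≤ 1 + F' τ ^ 2), Real.sqrt_nonneg (1 + F' τ ^ 2)]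
    have h2 : s * (x ^ 2 - M₁ ^ 2) ≤
        ∫ τ in M₁..x, 2 * τ * Real.sqrt (1 + F' τ ^ 2) := by
      have hc : ∫ τ in M₁..x, 2 * τ * s = s * (x ^ 2 - M₁ ^ 2) := by
        have : (fun τ : ℝ => 2 * τ * s) = fun τ : ℝ => (2 * s) * τ := by
          funext τ; ring
        rw [this, intervalIntegral.integral_const_mul, integral_id]
        ring
      rw [← hc]
      apply intervalIntegral.integral_mono_on hM₁x
        (by apply ContinuousOn.intervalIntegrable; fun_prop)
        (hintg M₁ x hM₁.le hM₁x hxx₀)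
      intro τ hτ
      have hτ0 : 0 ≤ τ := le_trans hM₁.le hτ.1
      have hF'le : F' M₁ ≤ F' τ :=
        hmon ⟨hM₁.le, hM₁x⟩ ⟨hτ0, hτ.2⟩ hτ.1
      have hsq : 1 + F' M₁ ^ 2 ≤ 1 + F' τ ^ 2 := by nlinarith
      have : s ≤ Real.sqrt (1 + F' τ ^ 2) := Real.sqrt_le_sqrt hsq
      have h2τ : (0:ℝ) ≤ 2 * τ := by linarith
      nlinarith
    linarith
  -- choose M₂ using hvlim
  have hev : {y : ℝ | 2 * M₁ ^ 2 ≤ v y} ∈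
      Filter.comap (fun x : ℝ => (x : EReal)) (nhdsWithin x₀ (Iio x₀)) :=
    hvlim (mem_atTop (2 * M₁ ^ 2))
  rw [Filter.mem_comap] at hev
  obtain ⟨T, hT, hTsub⟩ := hev
  have hbasis := nhdsLT_basis_of_exists_lt (α := EReal) ⟨0, hx₀⟩
  obtain ⟨a, hax₀, haT⟩ := hbasis.mem_iff.mp hT
  obtain ⟨r, har, hrx₀⟩ := EReal.exists_between_coe_real hax₀
  refine ⟨(s - 1) / s, div_pos (by linarith) (by linarith), max r M₁, ?_, ?_, ?_⟩
  · exact lt_max_of_lt_right hM₁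
  · have : ((max r M₁ : ℝ) : EReal) = max (r : EReal) (M₁ : EReal) := by
      rcases le_total r M₁ with h | h
      · simp [max_eq_right h, max_eq_right (EReal.coe_le_coe_iff.mpr h)]
      · simp [max_eq_left h, max_eq_left (EReal.coe_le_coe_iff.mpr h)]
    rw [this]
    exact max_lt hrx₀ hM₁x₀
  · intro x hxM₂ hxx₀
    have hxM₁ : M₁ < x := lt_of_le_of_lt (le_max_right r M₁) hxM₂
    have hxr : r < x := lt_of_le_of_lt (le_max_left r M₁) hxM₂
    have hvx : 2 * M₁ ^ 2 ≤ v x := by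
      apply hTsub
      apply haT
      exact ⟨lt_trans har (EReal.coe_lt_coe_iff.mpr hxr), hxx₀⟩
    have hb := hbound x hxM₁.le hxx₀
    have hv0 : 0 < v x := by nlinarith
    have hC₂s : (s - 1) / s * s = s - 1 := by field_simp
    rw [div_le_div_iff₀ hv0 (pow_pos hv0 2)]
    have hkey : (s - 1) / s * v x ≤ 2 * v x - 2 * x ^ 2 := by
      have hs0 : (0:ℝ) < s := by linarith
      rw [div_mul_eq_mul_div, div_le_iff₀ hs0]
      nlinarith [mul_nonneg (by linarith : (0:ℝ) ≤ s - 1)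
        (by linarith : (0:ℝ) ≤ v x - 2 * M₁ ^ 2)]
    nlinarith [sq_nonneg (v x)]
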